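/- arXiv:2001.06971 — 8 statements merged into one kernel-verified Lean document; each statement's English description precedes it below -/
import Mathlib

section
/- Let R be an integral domain, M a free R-module, and U a subset of the group Rˣ of units of R. Then the map S : (M × U) × (M × U) → (M × U) × (M × U) defined by S((a,x),(b,y)) = (((1−y)·a + x·b, y), (a, x)), where units act on M by scalar multiplication, is a switch: it is bijective and satisfies the set-theoretic Yang–Baxter equation. -/
namespace Paper

/-- `F × id` on `X × X × X`. -/
def mulId {X : Type*} (F : X × X → X × X) : X × X × X → X × X × X :=
  fun p => ((F (p.1, p.2.1)).1, (F (p.1, p.2.1)).2, p.2.2)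

/-- `id × G` on `X × X × X`. -/
def idMul {X : Type*} (G : X × X → X × X) : X × X × X → X × X × X :=
  fun p => (p.1, G p.2)

/-- The set-theoretic Yang–Baxter equation. -/
def YB {X : Type*} (S : X × X → X × X) : Prop :=
  (mulId S) ∘ (idMul S) ∘ (mulId S) = (idMul S) ∘ (mulId S) ∘ (idMul S)

/-- Non-degeneracy: `x ↦ Sˡ(a,x)` and `x ↦ Sʳ(x,b)` are bijections. -/
def NonDeg {X : Type*} (S : X × X → X × X) : Prop :=
  (∀ a : X, Function.Bijective fun x => (S (a, x)).1) ∧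
  (∀ b : X, Function.Bijective fun x => (S (x, b)).2)

/-- The biquandle condition for a non-degenerate switch. -/
def BiqCond {X : Type*} (S : X × X → X × X) : Prop :=
  ∀ a : X, (∃ u, (S (u, a)).2 = a ∧ (S (u, a)).1 = u) ∧
           (∃ d, (S (a, d)).1 = a ∧ (S (a, d)).2 = d)
/-- The module 2-switch $S(a,b;x,y) = ((1-y)a + xb, a; y, x)$ is a switch on `M × U`. -/
theorem module_two_switch_is_switch (R : Type*) [CommRing R] [IsDomain R]
    (M : Type*) [AddCommGroup M] [Module R M] [Module.Free R M]
    (U : Set Rˣ)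
    (S : (M × U) × (M × U) → (M × U) × (M × U))
    (hS : ∀ (a b : M) (x y : U),
      S ((a, x), (b, y)) =
        ((((1 : R) - ((y : Rˣ) : R)) • a + ((x : Rˣ) : R) • b, y), (a, x))) :
    Function.Bijective S ∧ YB S := by
  constructor
  · -- bijective via explicit inverse
    refine Function.bijective_iff_has_inverse.2
      ⟨fun p => (p.2, ((((p.2.2 : Rˣ)⁻¹ : Rˣ) : R) •
          (p.1.1 - ((1 : R) - ((p.1.2 : Rˣ) : R)) • p.2.1), p.1.2)), ?_, ?_⟩
    · rintro ⟨⟨a, x⟩, ⟨b, y⟩⟩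
      simp only [hS]
      refine Prod.ext rfl (Prod.ext ?_ rfl)
      push_cast
      simp [smul_sub, smul_smul, ← Units.val_mul]
    · rintro ⟨⟨c, y⟩, ⟨a, x⟩⟩
      simp only [hS]
      refine Prod.ext (Prod.ext ?_ rfl) rfl
      simp [smul_smul, ← Units.val_mul]
  · funext p
    obtain ⟨⟨a, x⟩, ⟨b, y⟩, ⟨c, z⟩⟩ := p
    simp only [YB, Function.comp_apply, mulId, idMul, hS]
    refine Prod.ext (Prod.ext ?_ rfl) rfl
    module

end Paper
end

section
/- Let R be a commutative ring, s, t ∈ Rˣ units of R, and M an R-module. Then the Alexander switch S : M × M → M × M defined by S(x,y) = (s·y, t·x + (1 − st)·y) is a non-degenerate biquandle switch: S is bijective, satisfies the set-theoretic Yang–Baxter equation, is non-degenerate, and satisfies the biquandle condition. -/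
namespace Paper

/-- The Alexander switch $S(x,y) = (sy, tx + (1-st)y)$ is a non-degenerate
biquandle switch on an `R`-module `M`. -/
theorem alexander_is_biquandle_switch (R : Type*) [CommRing R] (s t : Rˣ)
    (M : Type*) [AddCommGroup M] [Module R M]
    (S : M × M → M × M)
    (hS : ∀ x y : M,
      S (x, y) = ((s : R) • y, (t : R) • x + ((1 : R) - (s : R) * (t : R)) • y)) :
    Function.Bijective S ∧ YB S ∧ NonDeg S ∧ BiqCond S := by
  have hsi : ∀ x : M, ((s⁻¹ : Rˣ) : R) • ((s : R) • x) = x := fun x => by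
    rw [smul_smul, Units.inv_mul, one_smul]
  have hsi' : ∀ x : M, ((s : R)) • (((s⁻¹ : Rˣ) : R) • x) = x := fun x => by
    rw [smul_smul, Units.mul_inv, one_smul]
  have hti : ∀ x : M, ((t⁻¹ : Rˣ) : R) • ((t : R) • x) = x := fun x => by
    rw [smul_smul, Units.inv_mul, one_smul]
  have hti' : ∀ x : M, ((t : R)) • (((t⁻¹ : Rˣ) : R) • x) = x := fun x => by
    rw [smul_smul, Units.mul_inv, one_smul]
  refine ⟨?_, ?_, ⟨?_, ?_⟩, ?_⟩
  · -- bijective: explicit inverse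
    have : Function.LeftInverse
        (fun p : M × M => (((t⁻¹ : Rˣ) : R) • (p.2 - ((1 : R) - (s : R) * (t : R)) •
          (((s⁻¹ : Rˣ) : R) • p.1)), ((s⁻¹ : Rˣ) : R) • p.1)) S ∧
        Function.RightInverse
        (fun p : M × M => (((t⁻¹ : Rˣ) : R) • (p.2 - ((1 : R) - (s : R) * (t : R)) •
          (((s⁻¹ : Rˣ) : R) • p.1)), ((s⁻¹ : Rˣ) : R) • p.1)) S := by
      constructor
      · rintro ⟨x, y⟩
        simp only [hS, hsi, add_sub_cancel_right, hti]
      · rintro ⟨x, y⟩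
        simp only [hS, hsi', hti', Prod.mk.injEq]
        exact ⟨trivial, by abel⟩
    exact ⟨this.1.injective, this.2.surjective⟩
  · -- Yang-Baxter
    funext p
    obtain ⟨a, b, c⟩ := p
    simp only [Function.comp_apply, mulId, idMul, hS, smul_add, smul_smul, smul_sub,
      Prod.mk.injEq]
    refine ⟨trivial, by module, by module⟩
  · intro a
    constructor
    · intro x y h
      simp only [hS] at h
      have := congrArg (fun z => ((s⁻¹ : Rˣ) : R) • z) h
      simpa [hsi] using this
    · intro y
      exact ⟨((s⁻¹ : Rˣ) : R) • y, by simp [hS, hsi']⟩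
  · intro b
    constructor
    · intro x y h
      simp only [hS] at h
      have := add_right_cancel h
      have := congrArg (fun z => ((t⁻¹ : Rˣ) : R) • z) this
      simpa [hti] using this
    · intro y
      refine ⟨((t⁻¹ : Rˣ) : R) • (y - ((1 : R) - (s : R) * (t : R)) • b), ?_⟩
      simp only [hS, hti']
      abel
  · intro a
    refine ⟨⟨(s : R) • a, ?_, ?_⟩, ⟨((s⁻¹ : Rˣ) : R) • a, ?_, ?_⟩⟩
    · simp only [hS, smul_smul, sub_smul, one_smul]
      module
    · simp [hS]
    · simp [hS, hsi']
    · have key : ((1:R) - (s:R)*(t:R)) • (((s⁻¹:Rˣ):R) • a)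
          = ((s⁻¹:Rˣ):R) • a - (t:R) • a := by
        rw [sub_smul, one_smul, mul_comm, mul_smul, hsi']
      simp only [hS, key]
      abel
end Paper
end

section
/- Let X be a quandle and X₁ ⊆ X a trivial subquandle. Then the map S : (X × X₁) × (X × X₁) → (X × X₁) × (X × X₁) defined by S((a,x),(b,y)) = ((b, y), (a*b, x)) is a switch on X × X₁: it is bijective and satisfies the set-theoretic Yang–Baxter equation. -/
namespace Paper

open Quandles in
/-- The map $S(a,x;b,y) = (b,y; a*b, x)$ is a switch on `X × X₁`, where `X₁`
is a trivial subquandle of the quandle `X` (here `a*b = b ◃ a`). -/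
theorem quandle_S_is_switch (X : Type*) [Quandle X] (X₁ : Set X)
    (htriv : ∀ x ∈ X₁, ∀ y ∈ X₁, y ◃ x = x)
    (S : (X × X₁) × (X × X₁) → (X × X₁) × (X × X₁))
    (hS : ∀ (a b : X) (x y : X₁),
      S ((a, x), (b, y)) = ((b, y), (b ◃ a, x))) :
    Function.Bijective S ∧ YB S := by
  constructor
  · apply Function.bijective_iff_has_inverse.mpr
    refine ⟨fun p => ((p.1.1 ◃⁻¹ p.2.1, p.2.2), p.1), ?_, ?_⟩
    · rintro ⟨⟨a, x⟩, ⟨b, y⟩⟩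
      simp [hS, Rack.left_inv b a]
    · rintro ⟨⟨p, q⟩, ⟨r, s⟩⟩
      simp [hS, Rack.right_inv p r]
  · funext ⟨⟨a, x⟩, ⟨b, y⟩, ⟨c, z⟩⟩
    simp only [YB, mulId, idMul, Function.comp_apply]
    rw [hS a b x y]; dsimp only
    rw [hS (b ◃ a) c x z]; dsimp only
    rw [hS b c y z]; dsimp only
    rw [hS a c x z]; dsimp only
    rw [hS (c ◃ a) (c ◃ b) x y]
    rw [← Shelf.self_distrib]

end Paper
end

section
/- Let X be a quandle and X₁ ⊆ X a trivial subquandle. Then the map V : (X × X₁) × (X × X₁) → (X × X₁) × (X × X₁) defined by V((a,x),(b,y)) = ((b*⁻¹x, y), (a*y, x)) is an involutive switch on X × X₁: it is bijective, V ∘ V = id, and V satisfies the set-theoretic Yang–Baxter equation. -/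
namespace Paper

open Quandles in
lemma act_comm_of_triv {X : Type*} [Quandle X] {X₁ : Set X}
    (htriv : ∀ x ∈ X₁, ∀ y ∈ X₁, y ◃ x = x) {x y : X} (hx : x ∈ X₁) (hy : y ∈ X₁)
    (c : X) : x ◃ (y ◃ c) = y ◃ (x ◃ c) := by
  rw [Shelf.self_distrib, htriv y hy x hx]

open Quandles in
lemma act_invAct_comm_of_triv {X : Type*} [Quandle X] {X₁ : Set X}
    (htriv : ∀ x ∈ X₁, ∀ y ∈ X₁, y ◃ x = x) {x y : X} (hx : x ∈ X₁) (hy : y ∈ X₁)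
    (c : X) : y ◃ (x ◃⁻¹ c) = x ◃⁻¹ (y ◃ c) := by
  have := act_comm_of_triv htriv hx hy (x ◃⁻¹ c)
  rw [Rack.right_inv] at this
  rw [← this, Rack.left_inv]

open Quandles in
lemma invAct_comm_of_triv {X : Type*} [Quandle X] {X₁ : Set X}
    (htriv : ∀ x ∈ X₁, ∀ y ∈ X₁, y ◃ x = x) {x y : X} (hx : x ∈ X₁) (hy : y ∈ X₁)
    (c : X) : y ◃⁻¹ (x ◃⁻¹ c) = x ◃⁻¹ (y ◃⁻¹ c) := by
  have := act_invAct_comm_of_triv htriv hx hy (y ◃⁻¹ c)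
  rw [Rack.act_invAct_eq] at this
  conv_lhs => rw [← this, Rack.invAct_act_eq]

open Quandles in
/-- The map $V(a,x;b,y) = (b*⁻¹x, y; a*y, x)$ is an involutive switch on
`X × X₁`, where `X₁` is a trivial subquandle of the quandle `X`
(here `a*b = b ◃ a` and `a*⁻¹b = b ◃⁻¹ a`). -/
theorem quandle_V_is_involutive_switch (X : Type*) [Quandle X] (X₁ : Set X)
    (htriv : ∀ x ∈ X₁, ∀ y ∈ X₁, y ◃ x = x)
    (V : (X × X₁) × (X × X₁) → (X × X₁) × (X × X₁))
    (hV : ∀ (a b : X) (x y : X₁),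
      V ((a, x), (b, y)) = (((x : X) ◃⁻¹ b, y), ((y : X) ◃ a, x))) :
    Function.Bijective V ∧ V ∘ V = id ∧ YB V := by
  have hinv : V ∘ V = id := by
    funext p
    obtain ⟨⟨a, x⟩, ⟨b, y⟩⟩ := p
    simp only [Function.comp_apply, hV, id_eq]
    simp
  refine ⟨Function.bijective_iff_has_inverse.2 ⟨V, congrFun hinv, congrFun hinv⟩, hinv, ?_⟩
  funext p
  obtain ⟨⟨a, x⟩, ⟨b, y⟩, ⟨c, z⟩⟩ := p
  simp only [Function.comp_apply, mulId, idMul, hV]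
  simp only [hV, Prod.mk.injEq, Subtype.ext_iff]
  refine ⟨⟨invAct_comm_of_triv htriv x.2 y.2 c, trivial⟩,
    ⟨act_invAct_comm_of_triv htriv x.2 z.2 b, trivial⟩,
    (act_comm_of_triv htriv y.2 z.2 a).symm, trivial⟩
end Paper
end

section
/- Let X be a quandle and X₁ ⊆ X a trivial subquandle, and define S, V : (X × X₁) × (X × X₁) → (X × X₁) × (X × X₁) by S((a,x),(b,y)) = ((b, y), (a*b, x)) and V((a,x),(b,y)) = ((b*⁻¹x, y), (a*y, x)). Then the mixed Yang–Baxter relation (V × id) ∘ (id × S) ∘ (V × id) = (id × V) ∘ (S × id) ∘ (id × V) holds as maps (X × X₁)³ → (X × X₁)³; hence (S,V) is a virtual switch on X × X₁. -/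
namespace Paper

open Quandles in
/-- The pair $(S,V)$ satisfies the mixed Yang–Baxter relation; hence it is a
virtual switch on `X × X₁`. -/
theorem quandle_SV_mixed_relation (X : Type*) [Quandle X] (X₁ : Set X)
    (htriv : ∀ x ∈ X₁, ∀ y ∈ X₁, y ◃ x = x)
    (S V : (X × X₁) × (X × X₁) → (X × X₁) × (X × X₁))
    (hS : ∀ (a b : X) (x y : X₁),
      S ((a, x), (b, y)) = ((b, y), (b ◃ a, x)))
    (hV : ∀ (a b : X) (x y : X₁),
      V ((a, x), (b, y)) = (((x : X) ◃⁻¹ b, y), ((y : X) ◃ a, x))) :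
    mulId V ∘ idMul S ∘ mulId V = idMul V ∘ mulId S ∘ idMul V := by
  funext p
  obtain ⟨⟨a, x⟩, ⟨b, y⟩, ⟨c, z⟩⟩ := p
  simp only [mulId, idMul, Function.comp_apply, hS, hV]
  refine Prod.ext rfl (Prod.ext (Prod.ext ?_ rfl) (Prod.ext ?_ rfl))
  · -- (z : X) ◃ ((x : X) ◃⁻¹ b) = (x : X) ◃⁻¹ ((z : X) ◃ b)
    rw [← Rack.left_cancel (x : X)]
    rw [Rack.right_inv, Shelf.self_distrib, htriv (z : X) z.2 x x.2, Rack.right_inv]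
  · -- (y : X) ◃ (((y : X) ◃⁻¹ c) ◃ a) = c ◃ ((y : X) ◃ a)
    conv_rhs => rw [Shelf.self_distrib, Rack.right_inv]
end Paper
end

section
/- Let X be a quandle and X₁ ⊆ X a trivial subquandle, and let S : (X × X₁) × (X × X₁) → (X × X₁) × (X × X₁) be defined by S((a,x),(b,y)) = ((b, y), (a*b, x)). Then S is a biquandle switch on Y := X × X₁: for all A, B ∈ Y the maps B ↦ S^l(A,B) and A ↦ S^r(A,B) (with the other argument fixed) are bijections of Y, and for every A ∈ Y there exists U ∈ Y with S^r(U,A) = A and S^l(U,A) = U, and there exists D ∈ Y with S^l(A,D) = A and S^r(A,D) = D. -/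
namespace Paper

open Quandles in
/-- The map $S(a,x;b,y) = (b,y; a*b, x)$ is a biquandle switch on `X × X₁`:
it is non-degenerate and satisfies the biquandle condition. -/
theorem quandle_S_is_biquandle_switch (X : Type*) [Quandle X] (X₁ : Set X)
    (htriv : ∀ x ∈ X₁, ∀ y ∈ X₁, y ◃ x = x)
    (S : (X × X₁) × (X × X₁) → (X × X₁) × (X × X₁))
    (hS : ∀ (a b : X) (x y : X₁),
      S ((a, x), (b, y)) = ((b, y), (b ◃ a, x))) :
    NonDeg S ∧ BiqCond S := by
  constructor
  · constructor
    · intro A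
      have h : (fun B : X × X₁ => (S (A, B)).1) = id := by
        funext B
        obtain ⟨a, x⟩ := A; obtain ⟨b, y⟩ := B
        simp [hS]
      rw [h]
      exact Function.bijective_id
    · intro B
      obtain ⟨b, y⟩ := B
      have h : (fun A : X × X₁ => (S (A, (b, y))).2) =
          fun A : X × X₁ => ((Rack.act' b A.1 : X), A.2) := by
        funext A
        obtain ⟨a, x⟩ := A
        simp [hS, Rack.act'_apply]
      rw [h]
      constructor
      · intro A A' hAA'
        obtain ⟨a, x⟩ := A; obtain ⟨a', x'⟩ := A'
        simp only [Prod.mk.injEq] at hAA'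
        exact Prod.ext ((Rack.act' b).injective hAA'.1) hAA'.2
      · intro A
        exact ⟨((Rack.act' b).symm A.1, A.2), by simp⟩
  · intro A
    obtain ⟨a, x⟩ := A
    refine ⟨⟨(a, x), ?_, ?_⟩, ⟨(a, x), ?_, ?_⟩⟩ <;> simp [hS]
end Paper
end

section
/- Let X be a quandle and X₁ ⊆ X a trivial subquandle, and let V : (X × X₁) × (X × X₁) → (X × X₁) × (X × X₁) be defined by V((a,x),(b,y)) = ((b*⁻¹x, y), (a*y, x)). Then V is a biquandle switch on Y := X × X₁: for all A, B ∈ Y the maps B ↦ V^l(A,B) and A ↦ V^r(A,B) (with the other argument fixed) are bijections of Y, and for every A ∈ Y there exists U ∈ Y with V^r(U,A) = A and V^l(U,A) = U, and there exists D ∈ Y with V^l(A,D) = A and V^r(A,D) = D. -/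
namespace Paper

open Quandles in
/-- The map $V(a,x;b,y) = (b*⁻¹x, y; a*y, x)$ is a biquandle switch on `X × X₁`:
it is non-degenerate and satisfies the biquandle condition. -/
theorem quandle_V_is_biquandle_switch (X : Type*) [Quandle X] (X₁ : Set X)
    (htriv : ∀ x ∈ X₁, ∀ y ∈ X₁, y ◃ x = x)
    (V : (X × X₁) × (X × X₁) → (X × X₁) × (X × X₁))
    (hV : ∀ (a b : X) (x y : X₁),
      V ((a, x), (b, y)) = (((x : X) ◃⁻¹ b, y), ((y : X) ◃ a, x))) :
    NonDeg V ∧ BiqCond V := by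
  constructor
  · constructor
    · rintro ⟨a, x⟩
      constructor
      · rintro ⟨b, y⟩ ⟨c, z⟩ h
        simp only [hV] at h
        obtain ⟨h1, h2⟩ := Prod.mk.injEq .. ▸ h
        have : b = c := by
          have := congrArg ((x : X) ◃ ·) h1
          simpa [Rack.right_inv (x : X)] using this
        simp [this, h2]
      · rintro ⟨c, z⟩
        exact ⟨((x : X) ◃ c, z), by simp [hV, Rack.left_inv (x : X) c]⟩
    · rintro ⟨b, y⟩
      constructor
      · rintro ⟨a, x⟩ ⟨c, z⟩ h
        simp only [hV] at h
        obtain ⟨h1, h2⟩ := Prod.mk.injEq .. ▸ h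
        have : a = c := by
          have := congrArg ((y : X) ◃⁻¹ ·) h1
          simpa [Rack.left_inv (y : X)] using this
        simp [this, h2]
      · rintro ⟨c, z⟩
        exact ⟨((y : X) ◃⁻¹ c, z), by simp [hV, Rack.right_inv (y : X) c]⟩
  · rintro ⟨a, x⟩
    constructor
    · exact ⟨((x : X) ◃⁻¹ a, x), by simp [hV, Rack.right_inv (x : X) a]⟩
    · exact ⟨((x : X) ◃ a, x), by simp [hV, Rack.left_inv (x : X) a]⟩
end Paper
end

section
/- Let S be a biquandle switch on a set X. Then for all a, b ∈ X: S^l(a,b) = a if and only if S^r(a,b) = b. (This is the key algebraic step in the proof that the invariant X_{S,V}(D) is unchanged under the first Reidemeister move: from the crossing relations S^l(a,b) = a and S^r(a,b) = c one deduces c = b.) -/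
namespace Paper

/-- For a biquandle switch: $Sˡ(a,b) = a$ iff $Sʳ(a,b) = b$ (the key step in
invariance under the first Reidemeister move). -/
theorem biquandle_switch_R1_step (X : Type*) (S : X × X → X × X)
    (hbij : Function.Bijective S) (hYB : YB S)
    (hnd : NonDeg S) (hbq : BiqCond S) :
    ∀ a b : X, (S (a, b)).1 = a ↔ (S (a, b)).2 = b := by
  intro a b
  constructor
  · intro h
    obtain ⟨-, d, hd1, hd2⟩ := hbq a
    have hb : b = d := (hnd.1 a).1 (h.trans hd1.symm)
    rw [hb]; exact hd2
  · intro h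
    obtain ⟨⟨u, hu1, hu2⟩, -⟩ := hbq b
    have ha : a = u := (hnd.2 b).1 (h.trans hu1.symm)
    rw [ha]; exact hu2

end Paper
end
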